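/- Coordinated PoT lower bound of 2 for the 2-grouping game: in the 4-player cycle a,b,c,d with all adjacent symmetric weights equal to 1 (u_{ab}=u_{ba}=u_{bc}=u_{cb}=u_{cd}=u_{dc}=u_{da}=u_{ad}=1, others 0), tribes {a,c} and {b,d}, the profile with cliques {a,d} and {b,c} is an oligopolistic Nash equilibrium with social welfare 4, while the all-in-one-clique optimum has welfare 8. -/

import Mathlib

open Finset

/-- Coordinated PoT lower bound of 2 for the 2-grouping game: 4-cycle a,b,c,d
with unit adjacent weights, tribes {a,c} and {b,d}; the profile with cliques
{a,d} and {b,c} is an oligopolistic Nash equilibrium of welfare 4, while the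
all-in-one-clique optimum has welfare 8. -/
theorem stmt_19
    (u : Fin 4 → Fin 4 → ℝ)
    (hu : u = ![![0, 1, 0, 1], ![1, 0, 1, 0], ![0, 1, 0, 1], ![1, 0, 1, 0]])
    (τ : Fin 4 → ℕ) (hτ : τ = ![0, 1, 0, 1])
    (s : Fin 4 → Bool) (hs : s = ![false, true, true, false])
    (ui : (Fin 4 → Bool) → Fin 4 → ℝ)
    (hui : ∀ t i, ui t i = ∑ j ∈ univ.filter (fun j => t j = t i), u j i) :
    -- oligopolistic Nash: no tribe can increase its total utility by jointly
    -- reassigning the cliques of all its members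
    (∀ (t : ℕ) (s' : Fin 4 → Bool), (∀ j, τ j ≠ t → s' j = s j) →
      ∑ i ∈ univ.filter (fun i => τ i = t), ui s' i ≤
        ∑ i ∈ univ.filter (fun i => τ i = t), ui s i) ∧
    -- welfare of the equilibrium
    (∑ i, ui s i) = 4 ∧
    -- welfare of the all-in-one-clique optimum
    (∑ i, ui (fun _ => false) i) = 8 := by
  subst hu hτ hs
  refine ⟨?_, ?_, ?_⟩
  · intro t s' h
    rcases Nat.lt_or_ge t 2 with ht | ht
    · interval_cases t
      · have h1 : s' 1 = true := by simpa using h 1 (by simp)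
        have h3 : s' 3 = false := by simpa using h 3 (by simp)
        simp only [hui, Finset.sum_filter, Fin.sum_univ_four]
        rcases Bool.eq_false_or_eq_true (s' 0) with h0 | h0 <;>
          rcases Bool.eq_false_or_eq_true (s' 2) with h2 | h2 <;>
            simp [h0, h1, h2, h3]
      · have h0 : s' 0 = false := by simpa using h 0 (by simp)
        have h2 : s' 2 = true := by simpa using h 2 (by simp)
        simp only [hui, Finset.sum_filter, Fin.sum_univ_four]
        rcases Bool.eq_false_or_eq_true (s' 1) with h1 | h1 <;>
          rcases Bool.eq_false_or_eq_true (s' 3) with h3 | h3 <;>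
            simp [h0, h1, h2, h3]
    · have : ∀ j : Fin 4, s' j = (![false, true, true, false] : Fin 4 → Bool) j := by
        intro j
        apply h
        fin_cases j <;> simp <;> omega
      have hs' : s' = ![false, true, true, false] := funext this
      rw [hs']
  · simp only [hui, Finset.sum_filter, Fin.sum_univ_four]
    simp [Matrix.cons_val_succ']; norm_num
  · simp only [hui, Finset.sum_filter, Fin.sum_univ_four]
    simp [Matrix.cons_val_succ']; norm_num
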